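/- The monoid S is strongly C*-regular. -/

import Mathlib

/-- The alphabet of the monoid `S`: letters `a`, `b` and `x n`, `y n` for `n : ℤ`. -/
inductive SGen : Type
  | a : SGen
  | b : SGen
  | x : ℤ → SGen
  | y : ℤ → SGen

/-- The defining relations of `S`: `a·b·x n = b·x n` and `a·b·y n = b·y (n+1)` for `n ∈ ℤ`. -/
inductive SRel : FreeMonoid SGen → FreeMonoid SGen → Prop
  | xr (n : ℤ) : SRel (.of .a * .of .b * .of (.x n)) (.of .b * .of (.x n))
  | yr (n : ℤ) : SRel (.of .a * .of .b * .of (.y n)) (.of .b * .of (.y (n + 1)))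

/-- The monoid `S` presented by the generators `SGen` and the relations `SRel`. -/
abbrev S : Type := PresentedMonoid SRel

/-- The images of the generators in `S`. -/
def gen (g : SGen) : S := PresentedMonoid.of SRel g

/-- The principal right ideal `sS` of a monoid. -/
def rIdeal {M : Type*} [Monoid M] (s : M) : Set M := {m | ∃ u, m = s * u}

/-- The constructible right ideals of a monoid `M`: the smallest family of subsets of `M`
containing `M` itself and closed under the operations `X ↦ tX` and `X ↦ t⁻¹X = {m | t·m ∈ X}`
for every `t ∈ M`. -/
inductive IsConstructible (M : Type*) [Monoid M] : Set M → Prop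
  | univ : IsConstructible M Set.univ
  | mul (t : M) {X : Set M} : IsConstructible M X → IsConstructible M ((t * ·) '' X)
  | preimage (t : M) {X : Set M} : IsConstructible M X → IsConstructible M {m | t * m ∈ X}

/-- We encode partial bijections of a monoid `M` by their graphs, i.e. subsets of `M × M`.
`InLeftHull M G` says that the partial map with graph `G` belongs to the left inverse hull
`I_ℓ(M)` of `M`: the smallest collection of partial bijections of `M` containing the left
translations `m ↦ s·m` (with domain all of `M`) for every `s ∈ M` and closed under taking
inverses and compositions. -/
inductive InLeftHull (M : Type*) [Monoid M] : Set (M × M) → Prop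
  | translation (s : M) : InLeftHull M {p | p.2 = s * p.1}
  | inv {G : Set (M × M)} : InLeftHull M G → InLeftHull M {p | (p.2, p.1) ∈ G}
  | comp {G H : Set (M × M)} : InLeftHull M G → InLeftHull M H →
      InLeftHull M {p | ∃ z, (p.1, z) ∈ G ∧ (z, p.2) ∈ H}

/-- The domain of a partial map encoded by its graph. -/
def pDom {M : Type*} (G : Set (M × M)) : Set M := {m | ∃ y, (m, y) ∈ G}

/-- A left cancellative monoid `M` is *strongly C*-regular* if whenever
`h 0, …, h (n-1) ∈ I_ℓ(M)` and constructible right ideals `X, Xs 0, …, Xs (m-1) ∈ 𝒥(M)` satisfy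
`∅ ≠ X \ (Xs 0 ∪ ⋯ ∪ Xs (m-1)) ⊆ ⋃ₖ {s | s ∈ dom (h k), (h k) s = s}`, there are constructible
right ideals `Y 0, …, Y (l-1) ∈ 𝒥(M)` and indices `kj 0, …, kj (l-1)` such that
`X \ (Xs 0 ∪ ⋯ ∪ Xs (m-1)) ⊆ Y 0 ∪ ⋯ ∪ Y (l-1)` and, for each `j`, `Y j ⊆ dom (h (kj j))` and
`h (kj j)` fixes every point of `Y j`.  (Note that `(s, s) ∈ G` says exactly that `s` lies in
the domain of the partial map with graph `G` and is fixed by it.) -/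
def StronglyCstarRegular (M : Type*) [Monoid M] : Prop :=
  ∀ (n : ℕ) (h : Fin n → Set (M × M)) (m : ℕ) (X : Set M) (Xs : Fin m → Set M),
    (∀ k, InLeftHull M (h k)) →
    IsConstructible M X → (∀ i, IsConstructible M (Xs i)) →
    (X \ ⋃ i, Xs i).Nonempty →
    (X \ ⋃ i, Xs i) ⊆ (⋃ k, {s : M | (s, s) ∈ h k}) →
    ∃ (l : ℕ) (Y : Fin l → Set M) (kj : Fin l → Fin n),
      (∀ j, IsConstructible M (Y j)) ∧
      (X \ ⋃ i, Xs i) ⊆ (⋃ j, Y j) ∧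
      ∀ j, Y j ⊆ {s : M | (s, s) ∈ h (kj j)}

namespace SReg

abbrev Wd := List SGen

/-- Left multiplication by a generator on words. -/
def step (g : SGen) (l : Wd) : Wd :=
  match g, l with
  | .a, .b :: .x n :: t => .b :: .x n :: t
  | .a, .b :: .y n :: t => .b :: .y (n+1) :: t
  | g, l => g :: l

@[simp] lemma step_b (l : Wd) : step .b l = .b :: l := rfl
@[simp] lemma step_x (n : ℤ) (l : Wd) : step (.x n) l = .x n :: l := rfl
@[simp] lemma step_y (n : ℤ) (l : Wd) : step (.y n) l = .y n :: l := rfl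
@[simp] lemma step_a_bx (n : ℤ) (t : Wd) : step .a (.b :: .x n :: t) = .b :: .x n :: t := rfl
@[simp] lemma step_a_by (n : ℤ) (t : Wd) : step .a (.b :: .y n :: t) = .b :: .y (n+1) :: t := rfl

lemma step_a_eq_cons (l : Wd) (h1 : ∀ j T, l ≠ .b :: .x j :: T)
    (h2 : ∀ c T, l ≠ .b :: .y c :: T) : step .a l = .a :: l := by
  rcases l with _ | ⟨g1, _ | ⟨g2, t⟩⟩
  · rfl
  · cases g1 <;> rfl
  · cases g1 <;> try rfl
    cases g2 <;> try rfl
    · exact absurd rfl (h1 _ _)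
    · exact absurd rfl (h2 _ _)

/-- Case analysis for `step .a`. -/
lemma step_a_elim (l : Wd) :
    (∃ j T, l = .b :: .x j :: T) ∨ (∃ c T, l = .b :: .y c :: T) ∨
    ((∀ j T, l ≠ .b :: .x j :: T) ∧ (∀ c T, l ≠ .b :: .y c :: T) ∧ step .a l = .a :: l) := by
  rcases l with _ | ⟨g1, _ | ⟨g2, t⟩⟩
  · exact Or.inr (Or.inr ⟨by simp, by simp, rfl⟩)
  · exact Or.inr (Or.inr ⟨by simp, by simp, by cases g1 <;> rfl⟩)
  · cases g1 <;> try exact Or.inr (Or.inr ⟨by simp, by simp, rfl⟩)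
    cases g2
    · exact Or.inr (Or.inr ⟨by simp, by simp, rfl⟩)
    · exact Or.inr (Or.inr ⟨by simp, by simp, rfl⟩)
    · exact Or.inl ⟨_, _, rfl⟩
    · exact Or.inr (Or.inl ⟨_, _, rfl⟩)

lemma step_inj (g : SGen) : Function.Injective (step g) := by
  intro l1 l2 h
  cases g with
  | b => simpa using h
  | x n => simpa using h
  | y n => simpa using h
  | a =>
    rcases step_a_elim l1 with ⟨j, T, rfl⟩ | ⟨c, T, rfl⟩ | ⟨hx1, hy1, e1⟩ <;>
      rcases step_a_elim l2 with ⟨j2, T2, rfl⟩ | ⟨c2, T2, rfl⟩ | ⟨hx2, hy2, e2⟩ <;>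
        simp_all <;> omega

/-- Action of words on words by iterated `step`. -/
def actW (V l : Wd) : Wd := V.foldr step l

@[simp] lemma actW_nil (l : Wd) : actW [] l = l := rfl
@[simp] lemma actW_cons (g : SGen) (V l : Wd) : actW (g :: V) l = step g (actW V l) := rfl
lemma actW_append (A B l : Wd) : actW (A ++ B) l = actW A (actW B l) := List.foldr_append ..

/-- The monoid homomorphism from `S` to maps on words. -/
def phi : S →* Function.End Wd :=
  PresentedMonoid.lift (M := Function.End Wd) step (by
    intro u v hr
    cases hr with
    | xr n => simp only [map_mul]; funext l; rfl
    | yr n => simp only [map_mul]; funext l; rfl)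

def act (s : S) (l : Wd) : Wd := phi s l

lemma act_one (l : Wd) : act 1 l = l := by
  simp [act, map_one]; rfl

lemma act_mul (s t : S) (l : Wd) : act (s * t) l = act s (act t l) := by
  simp [act, map_mul]; rfl

lemma phi_of (g : SGen) : phi (gen g) = step g := PresentedMonoid.lift_of _ _

lemma act_gen (g : SGen) (l : Wd) : act (gen g) l = step g l := by
  show phi (gen g) l = step g l
  rw [phi_of]

def nf (s : S) : Wd := act s []

/-- Word to monoid element. -/
def iW (l : Wd) : S := l.foldr (fun g s => gen g * s) 1

@[simp] lemma iW_nil : iW [] = 1 := rfl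
@[simp] lemma iW_cons (g : SGen) (l : Wd) : iW (g :: l) = gen g * iW l := rfl
lemma iW_append (A B : Wd) : iW (A ++ B) = iW A * iW B := by
  induction A with
  | nil => simp
  | cons g A ih => simp [ih, mul_assoc]

lemma act_iW (V l : Wd) : act (iW V) l = actW V l := by
  induction V with
  | nil => simp [act_one]
  | cons g V ih => simp [act_mul, act_gen, ih]

lemma rel_x (n : ℤ) : gen .a * (gen .b * gen (.x n)) = gen .b * gen (.x n) := by
  have h : PresentedMonoid.mk SRel (.of .a * .of .b * .of (.x n)) =
      PresentedMonoid.mk SRel (.of .b * .of (.x n)) :=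
    Quotient.sound (ConGen.Rel.of _ _ (SRel.xr n))
  simpa [gen, PresentedMonoid.of, map_mul, mul_assoc] using h

lemma rel_y (n : ℤ) : gen .a * (gen .b * gen (.y n)) = gen .b * gen (.y (n+1)) := by
  have h : PresentedMonoid.mk SRel (.of .a * .of .b * .of (.y n)) =
      PresentedMonoid.mk SRel (.of .b * .of (.y (n+1))) :=
    Quotient.sound (ConGen.Rel.of _ _ (SRel.yr n))
  simpa [gen, PresentedMonoid.of, map_mul, mul_assoc] using h

lemma iW_step (g : SGen) (l : Wd) : iW (step g l) = gen g * iW l := by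
  rcases step_a_elim l with ⟨j, T, rfl⟩ | ⟨c, T, rfl⟩ | ⟨h1, h2, e⟩
  · cases g <;> try rfl
    calc iW (step .a (.b :: .x j :: T)) = gen .b * (gen (.x j) * iW T) := rfl
      _ = (gen .a * (gen .b * gen (.x j))) * iW T := by rw [rel_x, mul_assoc]
      _ = gen .a * iW (.b :: .x j :: T) := by
          rw [mul_assoc]; simp only [iW_cons, mul_assoc]
  · cases g <;> try rfl
    calc iW (step .a (.b :: .y c :: T)) = gen .b * (gen (.y (c+1)) * iW T) := rfl
      _ = (gen .a * (gen .b * gen (.y c))) * iW T := by rw [rel_y, mul_assoc]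
      _ = gen .a * iW (.b :: .y c :: T) := by
          rw [mul_assoc]; simp only [iW_cons, mul_assoc]
  · cases g <;> try rfl
    rw [e]; rfl

lemma iW_nf (s : S) : iW (nf s) = s := by
  induction s using PresentedMonoid.inductionOn with
  | _ w =>
    induction w using FreeMonoid.inductionOn' with
    | one =>
      rw [map_one]
      show iW (act 1 []) = 1
      rw [act_one]; rfl
    | of_mul g w ih =>
      have : PresentedMonoid.mk SRel (FreeMonoid.of g * w) = gen g * PresentedMonoid.mk SRel w := by
        simp [gen, PresentedMonoid.of, map_mul]
      rw [this]
      show iW (act (gen g * PresentedMonoid.mk SRel w) []) = _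
      rw [act_mul, act_gen]
      show iW (step g (nf (PresentedMonoid.mk SRel w))) = _
      rw [iW_step, ih]

lemma nf_inj {s t : S} (h : nf s = nf t) : s = t := by
  rw [← iW_nf s, ← iW_nf t, h]

lemma nf_mul (s t : S) : nf (s * t) = act s (nf t) := act_mul ..

@[simp] lemma nf_gen (g : SGen) : nf (gen g) = [g] := by
  show act (gen g) [] = [g]
  rw [act_gen]; cases g <;> rfl

lemma nf_gen_mul (g : SGen) (t : S) : nf (gen g * t) = step g (nf t) := by
  rw [nf_mul, act_gen]

@[simp] lemma nf_one : nf (1 : S) = [] := act_one []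

lemma act_inj (s : S) : Function.Injective (act s) := by
  induction s using PresentedMonoid.inductionOn with
  | _ w =>
    induction w using FreeMonoid.inductionOn' with
    | one => intro l1 l2 h; simpa [act_one] using h
    | of_mul g w ih =>
      have e : PresentedMonoid.mk SRel (FreeMonoid.of g * w) =
          gen g * PresentedMonoid.mk SRel w := by simp [gen, PresentedMonoid.of, map_mul]
      rw [e]
      intro l1 l2 h
      rw [act_mul, act_mul, act_gen, act_gen] at h
      exact ih (step_inj g h)

lemma mcancel {s u v : S} (h : s * u = s * v) : u = v := by
  have := congrArg nf h
  rw [nf_mul, nf_mul] at this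
  exact nf_inj (act_inj s this)

/-- Normal words. -/
def Nor (V : Wd) : Prop := actW V [] = V

lemma nor_nf (s : S) : Nor (nf s) := by
  have h : nf (iW (nf s)) = actW (nf s) [] := act_iW _ _
  rw [iW_nf] at h
  exact h.symm

lemma nor_cons {g : SGen} {V : Wd} (h : Nor (g :: V)) : Nor V ∧ step g V = g :: V := by
  have h' : step g (actW V []) = g :: V := h
  cases g with
  | a =>
    rcases step_a_elim (actW V []) with ⟨j, T, hT⟩ | ⟨c, T, hT⟩ | ⟨h1, h2, e⟩
    · rw [hT, step_a_bx] at h'; simp at h'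
    · rw [hT, step_a_by] at h'; simp at h'
    · rw [e] at h'
      have hV : actW V [] = V := by injection h'
      rw [hV] at e
      exact ⟨hV, e⟩
  | b =>
    rw [step_b] at h'
    have hV : actW V [] = V := by injection h'
    exact ⟨hV, rfl⟩
  | x n =>
    rw [step_x] at h'
    have hV : actW V [] = V := by injection h'
    exact ⟨hV, rfl⟩
  | y n =>
    rw [step_y] at h'
    have hV : actW V [] = V := by injection h'
    exact ⟨hV, rfl⟩

@[simp] lemma step_a_nil : step .a [] = [.a] := rfl
@[simp] lemma step_a_cons_a (t : Wd) : step .a (.a :: t) = .a :: .a :: t := rfl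
@[simp] lemma step_a_cons_x (i : ℤ) (t : Wd) : step .a (.x i :: t) = .a :: .x i :: t := rfl
@[simp] lemma step_a_cons_y (i : ℤ) (t : Wd) : step .a (.y i :: t) = .a :: .y i :: t := rfl
@[simp] lemma step_a_b_nil : step .a [.b] = [.a, .b] := rfl
@[simp] lemma step_a_b_a (t : Wd) : step .a (.b :: .a :: t) = .a :: .b :: .a :: t := rfl
@[simp] lemma step_a_b_b (t : Wd) : step .a (.b :: .b :: t) = .a :: .b :: .b :: t := rfl

lemma nor_cons2 {g : SGen} {V : Wd} (h : Nor (g :: V)) : Nor V := (nor_cons h).1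

/-- `step` commutes with appending a final `a` or `b`. -/
lemma step_append_ab {g0 : SGen} (hg : g0 = .a ∨ g0 = .b) (g : SGen) (M : Wd) :
    step g (M ++ [g0]) = step g M ++ [g0] := by
  cases g with
  | b => simp
  | x n => simp
  | y n => simp
  | a =>
    rcases M with _ | ⟨m1, M1⟩
    · rcases hg with rfl | rfl <;> rfl
    cases m1 with
    | a => simp
    | x i => simp
    | y i => simp
    | b =>
      rcases M1 with _ | ⟨m2, M2⟩
      · rcases hg with rfl | rfl <;> rfl
      cases m2 with
      | a => simp
      | b => simp
      | x i => simp
      | y i => simp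

lemma actW_append_ab {g0 : SGen} (hg : g0 = .a ∨ g0 = .b) (V M : Wd) :
    actW V (M ++ [g0]) = actW V M ++ [g0] := by
  induction V with
  | nil => rfl
  | cons g V ih => simp only [actW_cons, ih, step_append_ab hg]

/-- `t·a` has normal form `nf t ++ [a]`, same for `b`. -/
lemma nf_mul_ab {g0 : SGen} (hg : g0 = .a ∨ g0 = .b) (t : S) :
    nf (t * gen g0) = nf t ++ [g0] := by
  rw [nf_mul, nf_gen]
  conv_lhs => rw [← iW_nf t]
  rw [act_iW]
  have h1 : actW (nf t) [g0] = actW (nf t) [] ++ [g0] := actW_append_ab hg (nf t) []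
  rw [h1, show actW (nf t) [] = nf t from nor_nf t]

/-- The fundamental shift lemma, word version. -/
lemma KL (V : Wd) : ∃ P δ, (∀ n : ℤ, actW V [.y n] = P ++ [.y (n + δ)]) ∧
    (∀ j : ℤ, actW V [.x j] = P ++ [.x j]) := by
  induction V with
  | nil => exact ⟨[], 0, fun n => by simp, fun j => by simp⟩
  | cons g V ih =>
    obtain ⟨P, δ, hy, hx⟩ := ih
    cases g with
    | b => exact ⟨.b :: P, δ, fun n => by simp [hy n], fun j => by simp [hx j]⟩
    | x i => exact ⟨.x i :: P, δ, fun n => by simp [hy n], fun j => by simp [hx j]⟩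
    | y i => exact ⟨.y i :: P, δ, fun n => by simp [hy n], fun j => by simp [hx j]⟩
    | a =>
      rcases P with _ | ⟨p1, P'⟩
      · exact ⟨[.a], δ, fun n => by simp [hy n], fun j => by simp [hx j]⟩
      cases p1 with
      | a => exact ⟨.a :: .a :: P', δ, fun n => by simp [hy n], fun j => by simp [hx j]⟩
      | x i => exact ⟨.a :: .x i :: P', δ, fun n => by simp [hy n], fun j => by simp [hx j]⟩
      | y i => exact ⟨.a :: .y i :: P', δ, fun n => by simp [hy n], fun j => by simp [hx j]⟩
      | b =>
        rcases P' with _ | ⟨p2, P''⟩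
        · refine ⟨[.b], δ + 1, fun n => ?_, fun j => ?_⟩
          · simp [hy n]; omega
          · simp [hx j]
        cases p2 with
        | a => exact ⟨.a :: .b :: .a :: P'', δ, fun n => by simp [hy n],
            fun j => by simp [hx j]⟩
        | b => exact ⟨.a :: .b :: .b :: P'', δ, fun n => by simp [hy n],
            fun j => by simp [hx j]⟩
        | x i => exact ⟨.b :: .x i :: P'', δ, fun n => by simp [hy n],
            fun j => by simp [hx j]⟩
        | y c0 => exact ⟨.b :: .y (c0 + 1) :: P'', δ, fun n => by simp [hy n],
            fun j => by simp [hx j]⟩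

/-- `s` maps the deep cones uniformly: `GoodPair s P d` records the prefix and the shift. -/
def GoodPair (s : S) (P : Wd) (d : ℤ) : Prop :=
  (∀ n : ℤ, nf (s * gen (.y n)) = P ++ [.y (n + d)]) ∧
  (∀ j : ℤ, nf (s * gen (.x j)) = P ++ [.x j])

lemma K (s : S) : ∃ P d, GoodPair s P d := by
  obtain ⟨P, δ, hy, hx⟩ := KL (nf s)
  refine ⟨P, δ, fun n => ?_, fun j => ?_⟩
  · rw [nf_mul, nf_gen]
    conv_lhs => rw [← iW_nf s]
    rw [act_iW]; exact hy n
  · rw [nf_mul, nf_gen]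
    conv_lhs => rw [← iW_nf s]
    rw [act_iW]; exact hx j

lemma concat_inj {A B : Wd} {c c' : SGen} (h : A ++ [c] = B ++ [c']) : A = B ∧ c = c' := by
  have := List.append_inj' h (by simp)
  exact ⟨this.1, by simpa using this.2⟩

lemma good_iota {s : S} {P : Wd} {d : ℤ} (h : GoodPair s P d) : GoodPair (iW P) P 0 := by
  obtain ⟨Q, δ, hy, hx⟩ := KL P
  have hnor : actW (P ++ [.y (0 + d)]) [] = P ++ [.y (0 + d)] := by
    rw [← h.1 0]; exact nor_nf _
  rw [actW_append, show actW [SGen.y (0+d)] [] = [.y (0+d)] from rfl, hy (0 + d)] at hnor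
  obtain ⟨hQ, hc⟩ := concat_inj hnor
  have hδ : δ = 0 := by
    have := SGen.y.inj hc; omega
  subst hδ; subst hQ
  constructor
  · intro n
    rw [nf_mul, nf_gen, act_iW]
    rw [hy n]
  · intro j
    rw [nf_mul, nf_gen, act_iW]
    exact hx j

lemma good_y_elem {s : S} {P : Wd} {d : ℤ} (h : GoodPair s P d) (n : ℤ) :
    s * gen (.y n) = iW P * gen (.y (n + d)) := by
  apply nf_inj
  rw [h.1 n, (good_iota h).1 (n + d)]
  norm_num

lemma good_x_elem {s : S} {P : Wd} {d : ℤ} (h : GoodPair s P d) (j : ℤ) :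
    s * gen (.x j) = iW P * gen (.x j) := by
  apply nf_inj
  rw [h.2 j, (good_iota h).2 j]

/-- Factorization lemma: how can `s·u` end in a letter `y m` after prefix `P`? -/
lemma factor (s u : S) (P : Wd) (m : ℤ) (h : nf (s * u) = P ++ [.y m]) :
    u = 1 ∨ ∃ V e d₂, u = iW V * gen (.y e) ∧ GoodPair (s * iW V) P d₂ ∧ m = e + d₂ := by
  rcases (nf u).eq_nil_or_concat' with h0 | ⟨U, g0, hU⟩
  · left
    rw [← iW_nf u, h0]; rfl
  · have hu : u = iW U * gen g0 := by
      rw [← iW_nf u, hU, iW_append]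
      simp [mul_assoc]
    have hsu : s * u = (s * iW U) * gen g0 := by rw [hu, mul_assoc]
    cases g0 with
    | a =>
      rw [hsu, nf_mul_ab (Or.inl rfl)] at h
      exact absurd (concat_inj h).2 (by simp)
    | b =>
      rw [hsu, nf_mul_ab (Or.inr rfl)] at h
      exact absurd (concat_inj h).2 (by simp)
    | x j =>
      obtain ⟨Q, d, hgp⟩ := K (s * iW U)
      rw [hsu, hgp.2 j] at h
      exact absurd (concat_inj h).2 (by simp)
    | y e =>
      obtain ⟨Q, d, hgp⟩ := K (s * iW U)
      rw [hsu, hgp.1 e] at h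
      obtain ⟨hQ, hc⟩ := concat_inj h
      subst hQ
      exact Or.inr ⟨U, e, d, hu, hgp, (SGen.y.inj hc).symm⟩

/-- Branch letters. -/
def Br (g : SGen) : Prop := (∃ j, g = .x j) ∨ (∃ j, g = .y j)

lemma constructible_rightIdeal {Z : Set S} (hZ : IsConstructible S Z) :
    ∀ m ∈ Z, ∀ u, m * u ∈ Z := by
  induction hZ with
  | univ => intro m _ u; trivial
  | mul t h ih =>
    rintro m ⟨z, hz, rfl⟩ u
    exact ⟨z * u, ih z hz u, (mul_assoc ..).symm⟩
  | preimage t h ih =>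
    intro m hm u
    have := ih _ hm u
    simpa [mul_assoc] using this

lemma hull_equivariant {G : Set (S × S)} (hG : InLeftHull S G) :
    ∀ p ∈ G, ∀ u : S, (p.1 * u, p.2 * u) ∈ G := by
  induction hG with
  | translation s =>
    intro p hp u
    show p.2 * u = s * (p.1 * u)
    rw [show p.2 = s * p.1 from hp, mul_assoc]
  | inv h ih => intro p hp u; exact ih (p.2, p.1) hp u
  | comp h1 h2 ih1 ih2 =>
    rintro p ⟨z, hz1, hz2⟩ u
    exact ⟨z * u, ih1 (p.1, z) hz1 u, ih2 (z, p.2) hz2 u⟩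

/-- Chains of partial bijections. -/
def chain : List (S × S) → Set (S × S)
  | [] => {p | p.1 = p.2}
  | st :: L => {p | ∃ u, p.1 = st.1 * u ∧ (st.2 * u, p.2) ∈ chain L}

lemma mem_chain_append : ∀ (L1 L2 : List (S × S)) (p : S × S),
    p ∈ chain (L1 ++ L2) ↔ ∃ z, (p.1, z) ∈ chain L1 ∧ (z, p.2) ∈ chain L2 := by
  intro L1
  induction L1 with
  | nil =>
    intro L2 p
    constructor
    · intro h; exact ⟨p.1, rfl, h⟩
    · rintro ⟨z, hz, h⟩
      have hz' : p.1 = z := hz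
      rw [List.nil_append]
      rw [← hz'] at h
      simpa using h
  | cons st L1 ih =>
    intro L2 p
    constructor
    · rintro ⟨u, h1, h2⟩
      obtain ⟨z, hz1, hz2⟩ := (ih L2 (st.2 * u, p.2)).mp h2
      exact ⟨z, ⟨u, h1, hz1⟩, hz2⟩
    · rintro ⟨z, ⟨u, h1, hz1⟩, hz2⟩
      exact ⟨u, h1, (ih L2 _).mpr ⟨z, hz1, hz2⟩⟩

lemma chain_swap : ∀ (L : List (S × S)) (p : S × S),
    p ∈ chain (L.reverse.map Prod.swap) ↔ (p.2, p.1) ∈ chain L := by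
  intro L
  induction L with
  | nil => intro p; exact ⟨fun h => (h : p.1 = p.2).symm, fun h => (h : p.2 = p.1).symm⟩
  | cons st L ih =>
    intro p
    simp only [List.reverse_cons, List.map_append, List.map_cons, List.map_nil]
    rw [mem_chain_append]
    constructor
    · rintro ⟨z, hz1, ⟨u, hu1, hu2⟩⟩
      refine ⟨u, hu2.symm, ?_⟩
      have := (ih (p.1, z)).mp hz1
      rwa [show z = st.2 * u from hu1] at this
    · rintro ⟨u, h1, h2⟩
      exact ⟨st.2 * u, (ih (p.1, st.2 * u)).mpr h2, ⟨u, rfl, h1.symm⟩⟩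

lemma hull_chain {G : Set (S × S)} (hG : InLeftHull S G) : ∃ L, G = chain L := by
  induction hG with
  | translation s =>
    refine ⟨[(1, s)], ?_⟩
    ext p
    constructor
    · intro h
      exact ⟨p.1, (one_mul p.1).symm, (h : p.2 = s * p.1).symm⟩
    · rintro ⟨u, h1, h2⟩
      show p.2 = s * p.1
      rw [h1, one_mul] at *
      exact (h2 : s * u = p.2).symm
  | inv h ih =>
    obtain ⟨L, rfl⟩ := ih
    refine ⟨L.reverse.map Prod.swap, ?_⟩
    ext p
    rw [chain_swap]
    rfl
  | comp h1 h2 ih1 ih2 =>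
    obtain ⟨L1, rfl⟩ := ih1
    obtain ⟨L2, rfl⟩ := ih2
    refine ⟨L1 ++ L2, ?_⟩
    ext p
    rw [mem_chain_append]
    rfl

lemma chain_fun (L : List (S × S)) : ∀ m z1 z2, (m, z1) ∈ chain L → (m, z2) ∈ chain L → z1 = z2 := by
  induction L with
  | nil => intro m z1 z2 h1 h2; exact (h1 : m = z1).symm.trans h2
  | cons st L ih =>
    rintro m z1 z2 ⟨u1, hu1, h1⟩ ⟨u2, hu2, h2⟩
    have : u1 = u2 := mcancel (hu1.symm.trans hu2)
    subst this
    exact ih _ _ _ h1 h2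

lemma H2 (L : List (S × S)) : ∀ (P : Wd), GoodPair (iW P) P 0 →
    (∃ Q σ, GoodPair (iW Q) Q 0 ∧
      (∀ n : ℤ, (iW P * gen (.y n), iW Q * gen (.y (n + σ))) ∈ chain L) ∧
      (∀ j : ℤ, (iW P * gen (.x j), iW Q * gen (.x j)) ∈ chain L)) ∨
    (∀ n₁ n₂ z₁ z₂, (iW P * gen (.y n₁), z₁) ∈ chain L →
      (iW P * gen (.y n₂), z₂) ∈ chain L → n₁ = n₂) := by
  induction L with
  | nil =>
    intro P hP
    left
    exact ⟨P, 0, hP, fun n => show _ = _ by rw [add_zero], fun j => rfl⟩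
  | cons st L ih =>
    intro P hP
    by_cases hex : ∃ n u, iW P * gen (.y n) = st.1 * u
    · obtain ⟨n₀, u₀, he⟩ := hex
      have hnf : nf (st.1 * u₀) = P ++ [.y n₀] := by
        rw [← he, hP.1 n₀, add_zero]
      rcases factor st.1 u₀ P n₀ hnf with h1 | ⟨V, e, d₂, huV, hgp, hm⟩
      · right
        rw [h1, mul_one] at he
        rintro n₁ n₂ z₁ z₂ ⟨u₁, he₁, _⟩ ⟨u₂, he₂, _⟩
        have key : ∀ n u, iW P * gen (.y n) = st.1 * u → n = n₀ := by
          intro n u hn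
          rw [← he, mul_assoc] at hn
          have h2 := mcancel hn
          have h3 := congrArg nf h2
          rw [nf_gen, nf_gen_mul, step_y] at h3
          injection h3 with hh _
          exact SGen.y.inj hh
        rw [key n₁ u₁ he₁, key n₂ u₂ he₂]
      · have keyy : ∀ c : ℤ, st.1 * (iW V * gen (.y c)) = iW P * gen (.y (c + d₂)) := by
          intro c; rw [← mul_assoc]; exact good_y_elem hgp c
        have keyx : ∀ j : ℤ, st.1 * (iW V * gen (.x j)) = iW P * gen (.x j) := by
          intro j; rw [← mul_assoc]; exact good_x_elem hgp j
        obtain ⟨Q₃, d₃, hgp₃⟩ := K (st.2 * iW V)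
        have h3 : GoodPair (iW Q₃) Q₃ 0 := good_iota hgp₃
        have key3 : ∀ c : ℤ, st.2 * (iW V * gen (.y c)) = iW Q₃ * gen (.y (c + d₃)) := by
          intro c; rw [← mul_assoc]; exact good_y_elem hgp₃ c
        have key3x : ∀ j : ℤ, st.2 * (iW V * gen (.x j)) = iW Q₃ * gen (.x j) := by
          intro j; rw [← mul_assoc]; exact good_x_elem hgp₃ j
        rcases ih Q₃ h3 with ⟨Q', σ', hQ', hy', hx'⟩ | hr
        · left
          refine ⟨Q', σ' + d₃ - d₂, hQ', fun n => ?_, fun j => ?_⟩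
          · refine ⟨iW V * gen (.y (n - d₂)), ?_, ?_⟩
            · have hn : n - d₂ + d₂ = n := by ring
              rw [keyy (n - d₂), hn]
            · rw [key3 (n - d₂)]
              have hidx : (n - d₂ + d₃) + σ' = n + (σ' + d₃ - d₂) := by ring
              have := hy' (n - d₂ + d₃)
              rwa [hidx] at this
          · refine ⟨iW V * gen (.x j), ?_, ?_⟩
            · rw [keyx j]
            · rw [key3x j]; exact hx' j
        · right
          rintro n₁ n₂ z₁ z₂ ⟨u₁, he₁, hc₁⟩ ⟨u₂, he₂, hc₂⟩
          have e1 : st.1 * u₁ = st.1 * (iW V * gen (.y (n₁ - d₂))) := by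
            have hn : n₁ - d₂ + d₂ = n₁ := by ring
            rw [← he₁, keyy (n₁ - d₂), hn]
          have e2 : st.1 * u₂ = st.1 * (iW V * gen (.y (n₂ - d₂))) := by
            have hn : n₂ - d₂ + d₂ = n₂ := by ring
            rw [← he₂, keyy (n₂ - d₂), hn]
          rw [mcancel e1, key3] at hc₁
          rw [mcancel e2, key3] at hc₂
          have := hr (n₁ - d₂ + d₃) (n₂ - d₂ + d₃) z₁ z₂ hc₁ hc₂
          omega
    · right
      rintro n₁ n₂ z₁ z₂ ⟨u₁, he₁, _⟩ _
      exact absurd ⟨n₁, u₁, he₁⟩ hex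

lemma fixAll {G : Set (S × S)} (hG : InLeftHull S G) (v : S) {n₁ n₂ : ℤ} (hne : n₁ ≠ n₂)
    (h₁ : (v * gen (.y n₁), v * gen (.y n₁)) ∈ G)
    (h₂ : (v * gen (.y n₂), v * gen (.y n₂)) ∈ G) :
    ∀ g u, Br g → (v * (gen g * u), v * (gen g * u)) ∈ G := by
  obtain ⟨L, rfl⟩ := hull_chain hG
  obtain ⟨P, d, hgp⟩ := K v
  have hP := good_iota hgp
  have e₁ := good_y_elem hgp n₁
  have e₂ := good_y_elem hgp n₂
  rw [e₁] at h₁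
  rw [e₂] at h₂
  rcases H2 L P hP with ⟨Q, σ, hQ, hy, hx⟩ | hr
  · have f1 : iW Q * gen (.y ((n₁ + d) + σ)) = iW P * gen (.y (n₁ + d)) :=
      chain_fun L _ _ _ (hy (n₁ + d)) h₁
    have f2 := congrArg nf f1
    rw [hQ.1, hP.1] at f2
    obtain ⟨hQP, hcc⟩ := concat_inj f2
    have hσ : σ = 0 := by have := SGen.y.inj hcc; omega
    subst hσ; subst hQP
    have fixy : ∀ c : ℤ, (iW Q * gen (.y c), iW Q * gen (.y c)) ∈ chain L := by
      intro c
      have := hy c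
      rwa [add_zero] at this
    rintro g u (⟨j, rfl⟩ | ⟨c, rfl⟩)
    · have hv : v * (gen (.x j) * u) = (iW Q * gen (.x j)) * u := by
        rw [← mul_assoc, good_x_elem hgp j]
      rw [hv]
      exact hull_equivariant hG _ (hx j) u
    · have hv : v * (gen (.y c) * u) = (iW Q * gen (.y (c + d))) * u := by
        rw [← mul_assoc, good_y_elem hgp c]
      rw [hv]
      exact hull_equivariant hG _ (fixy (c + d)) u
  · exact absurd (hr (n₁ + d) (n₂ + d) _ _ h₁ h₂) (by omega)

lemma lemJ {Z : Set S} (hZ : IsConstructible S Z) :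
    ∀ v (n₁ n₂ : ℤ), n₁ ≠ n₂ → v * gen (.y n₁) ∈ Z → v * gen (.y n₂) ∈ Z →
      ∀ g u, Br g → v * (gen g * u) ∈ Z := by
  induction hZ with
  | univ => intro v n₁ n₂ _ _ _ g u _; trivial
  | mul t h ih =>
    intro v n₁ n₂ hne h₁ h₂ g u hg
    obtain ⟨z₁, hz₁, he₁⟩ := h₁
    obtain ⟨z₂, hz₂, he₂⟩ := h₂
    replace he₁ : t * z₁ = v * gen (.y n₁) := he₁
    replace he₂ : t * z₂ = v * gen (.y n₂) := he₂
    obtain ⟨P, d, hgp⟩ := K v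
    have hnf₁ : nf (t * z₁) = P ++ [.y (n₁ + d)] := by
      rw [show t * z₁ = v * gen (.y n₁) from he₁]
      exact hgp.1 n₁
    rcases factor t z₁ P (n₁ + d) hnf₁ with h1 | ⟨V, e, d₂, hzV, hgp₂, hm⟩
    · exfalso
      rw [h1, mul_one] at he₁
      rw [he₁, mul_assoc] at he₂
      have h4 := mcancel he₂
      have h3 := congrArg nf h4
      rw [nf_gen_mul, step_y, nf_gen] at h3
      injection h3 with hh _
      exact hne (SGen.y.inj hh)
    · have keyy : ∀ c : ℤ, t * (iW V * gen (.y c)) = v * gen (.y (c + d₂ - d)) := by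
        intro c
        rw [← mul_assoc, good_y_elem hgp₂ c, good_y_elem hgp (c + d₂ - d)]
        have hidx : c + d₂ - d + d = c + d₂ := by ring
        rw [hidx]
      have keyx : ∀ j : ℤ, t * (iW V * gen (.x j)) = v * gen (.x j) := by
        intro j
        rw [← mul_assoc, good_x_elem hgp₂ j, good_x_elem hgp j]
      have hz2' : z₂ = iW V * gen (.y (e + n₂ - n₁)) := by
        apply mcancel (s := t)
        rw [show t * z₂ = v * gen (.y n₂) from he₂, keyy (e + n₂ - n₁)]
        have hidx : e + n₂ - n₁ + d₂ - d = n₂ := by omega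
        rw [hidx]
      rw [hzV] at hz₁
      rw [hz2'] at hz₂
      have hee : e ≠ e + n₂ - n₁ := by omega
      have hIH := ih (iW V) e (e + n₂ - n₁) hee hz₁ hz₂
      rcases hg with ⟨j, rfl⟩ | ⟨c, rfl⟩
      · refine ⟨iW V * (gen (.x j) * u), hIH _ u (Or.inl ⟨j, rfl⟩), ?_⟩
        show t * (iW V * (gen (.x j) * u)) = v * (gen (.x j) * u)
        have ha : t * (iW V * (gen (.x j) * u)) = (t * (iW V * gen (.x j))) * u := by
          rw [mul_assoc, mul_assoc]
        rw [ha, keyx j, mul_assoc]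
      · refine ⟨iW V * (gen (.y (c + d - d₂)) * u), hIH _ u (Or.inr ⟨c + d - d₂, rfl⟩), ?_⟩
        show t * (iW V * (gen (.y (c + d - d₂)) * u)) = v * (gen (.y c) * u)
        have ha : t * (iW V * (gen (.y (c + d - d₂)) * u)) =
            (t * (iW V * gen (.y (c + d - d₂)))) * u := by
          rw [mul_assoc, mul_assoc]
        rw [ha, keyy (c + d - d₂)]
        have hidx : c + d - d₂ + d₂ - d = c := by ring
        rw [hidx, mul_assoc]
  | preimage t h ih =>
    intro v n₁ n₂ hne h₁ h₂ g u hg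
    simp only [Set.mem_setOf_eq] at h₁ h₂ ⊢
    rw [← mul_assoc] at h₁ h₂ ⊢
    exact ih (t * v) n₁ n₂ hne h₁ h₂ g u hg

def IS (v : S) : Set S := {m | ∃ u, m = v * u}
def IC (v : S) : Set S := {m | ∃ g u, Br g ∧ m = v * (gen g * u)}

def Fam (Z : Set S) : Prop := Z = ∅ ∨ (∃ v, Z = IS v) ∨ (∃ v, Z = IC v)

lemma mem_IS_univ (w : S) : w ∈ IS 1 := ⟨w, (one_mul w).symm⟩

lemma IS_mul (s t : S) : IS (s * t) = (s * ·) '' (IS t) := by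
  ext m
  constructor
  · rintro ⟨u, rfl⟩; exact ⟨t * u, ⟨u, rfl⟩, (mul_assoc ..).symm⟩
  · rintro ⟨z, ⟨u, rfl⟩, rfl⟩; exact ⟨u, (mul_assoc ..).symm⟩

lemma IC_mul (s t : S) : IC (s * t) = (s * ·) '' (IC t) := by
  ext m
  constructor
  · rintro ⟨g, u, hg, rfl⟩; exact ⟨t * (gen g * u), ⟨g, u, hg, rfl⟩, (mul_assoc ..).symm⟩
  · rintro ⟨z, ⟨g, u, hg, rfl⟩, rfl⟩; exact ⟨g, u, hg, (mul_assoc ..).symm⟩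

@[simp] lemma iW_single (g : SGen) : iW [g] = gen g := mul_one (gen g)

lemma nf_iW_mul (V : Wd) (u : S) : nf (iW V * u) = actW V (nf u) := by
  rw [nf_mul, act_iW]

lemma nf_iW {T : Wd} (h : Nor T) : nf (iW T) = T := by
  have h1 : nf (iW T) = actW T [] := by rw [nf, act_iW]
  rw [h1]; exact h

lemma mem_IC_one_iff {m : S} :
    m ∈ IC 1 ↔ (∃ j T, nf m = .x j :: T) ∨ (∃ c T, nf m = .y c :: T) := by
  constructor
  · rintro ⟨g, u, (⟨j, rfl⟩ | ⟨c, rfl⟩), rfl⟩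
    · exact Or.inl ⟨j, nf u, by rw [one_mul, nf_gen_mul, step_x]⟩
    · exact Or.inr ⟨c, nf u, by rw [one_mul, nf_gen_mul, step_y]⟩
  · rintro (⟨j, T, hm⟩ | ⟨c, T, hm⟩)
    · exact ⟨.x j, iW T, Or.inl ⟨j, rfl⟩, by rw [one_mul, ← iW_nf m, hm]; rfl⟩
    · exact ⟨.y c, iW T, Or.inr ⟨c, rfl⟩, by rw [one_mul, ← iW_nf m, hm]; rfl⟩

lemma mem_IS_cons {g₀ : SGen} {V' : Wd} {m : S} (h : m ∈ IS (iW (g₀ :: V'))) :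
    ∃ l, nf m = step g₀ l := by
  obtain ⟨u, rfl⟩ := h
  exact ⟨actW V' (nf u), by rw [nf_iW_mul]; rfl⟩

lemma mem_IC_cons {g₀ : SGen} {V' : Wd} {m : S} (h : m ∈ IC (iW (g₀ :: V'))) :
    ∃ l, nf m = step g₀ l := by
  obtain ⟨g, u, _, rfl⟩ := h
  exact ⟨actW V' (nf (gen g * u)), by rw [nf_iW_mul]; rfl⟩

lemma clash {g g₀ : SGen} {l T : Wd} (h : step g₀ l = g :: T) :
    g = g₀ ∨ (g₀ = .a ∧ g = .b) := by
  cases g₀ with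
  | a =>
    rcases step_a_elim l with ⟨j, T', rfl⟩ | ⟨c, T', rfl⟩ | ⟨_, _, e⟩
    · rw [step_a_bx] at h; injection h with h1 _; exact Or.inr ⟨rfl, h1.symm⟩
    · rw [step_a_by] at h; injection h with h1 _; exact Or.inr ⟨rfl, h1.symm⟩
    · rw [e] at h; injection h with h1 _; exact Or.inl h1.symm
  | b => rw [step_b] at h; injection h with h1 _; exact Or.inl h1.symm
  | x i => rw [step_x] at h; injection h with h1 _; exact Or.inl h1.symm
  | y i => rw [step_y] at h; injection h with h1 _; exact Or.inl h1.symm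

lemma pre_cancel_IS (w : S) (g : SGen) : {m | gen g * m ∈ IS (gen g * w)} = IS w := by
  ext m
  constructor
  · rintro ⟨u, he⟩
    rw [mul_assoc] at he
    exact ⟨u, mcancel he⟩
  · rintro ⟨u, rfl⟩
    exact ⟨u, by rw [mul_assoc]⟩

lemma pre_cancel_IC (w : S) (g : SGen) : {m | gen g * m ∈ IC (gen g * w)} = IC w := by
  ext m
  constructor
  · rintro ⟨g', u, hg', he⟩
    rw [mul_assoc] at he
    exact ⟨g', u, hg', mcancel he⟩
  · rintro ⟨g', u, hg', rfl⟩
    exact ⟨g', u, hg', by rw [mul_assoc]⟩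

lemma rel_x' (j : ℤ) (u : S) :
    gen .a * (gen .b * (gen (.x j) * u)) = gen .b * (gen (.x j) * u) := by
  calc gen .a * (gen .b * (gen (.x j) * u)) = (gen .a * (gen .b * gen (.x j))) * u := by
        rw [mul_assoc, mul_assoc]
    _ = (gen .b * gen (.x j)) * u := by rw [rel_x]
    _ = gen .b * (gen (.x j) * u) := by rw [mul_assoc]

lemma rel_y' (c : ℤ) (u : S) :
    gen .a * (gen .b * (gen (.y c) * u)) = gen .b * (gen (.y (c+1)) * u) := by
  calc gen .a * (gen .b * (gen (.y c) * u)) = (gen .a * (gen .b * gen (.y c))) * u := by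
        rw [mul_assoc, mul_assoc]
    _ = (gen .b * gen (.y (c+1))) * u := by rw [rel_y]
    _ = gen .b * (gen (.y (c+1)) * u) := by rw [mul_assoc]

/-- Generic reduction for `b⁻¹(a·Z)`. -/
lemma redA (Z : Set S) (m : S) :
    gen .b * m ∈ (gen .a * ·) '' Z ↔
      ((∃ j T, nf m = .x j :: T ∧ gen .b * m ∈ Z) ∨
       (∃ c T, nf m = .y c :: T ∧ gen .b * (gen (.y (c - 1)) * iW T) ∈ Z)) := by
  constructor
  · rintro ⟨z, hz, he⟩
    replace he : gen .a * z = gen .b * m := he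
    have hnf := congrArg nf he
    rw [nf_gen_mul, nf_gen_mul, step_b] at hnf
    rcases step_a_elim (nf z) with ⟨j, T, hT⟩ | ⟨c, T, hT⟩ | ⟨h1, h2, e⟩
    · rw [hT, step_a_bx] at hnf
      injection hnf with _ hm
      left
      refine ⟨j, T, hm.symm, ?_⟩
      have hzz : gen .b * m = z := by
        apply nf_inj
        rw [nf_gen_mul, step_b, hT, hm]
      rwa [hzz]
    · rw [hT, step_a_by] at hnf
      injection hnf with _ hm
      right
      refine ⟨c + 1, T, hm.symm, ?_⟩
      have hT' : Nor T := by
        have h0 := nor_nf z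
        rw [hT] at h0
        exact (nor_cons (nor_cons h0).1).1
      have hzz : gen .b * (gen (.y (c + 1 - 1)) * iW T) = z := by
        apply nf_inj
        rw [nf_gen_mul, nf_gen_mul, step_y, step_b, hT]
        rw [nf_iW hT']
        norm_num
      rwa [hzz]
    · rw [e] at hnf
      injection hnf with h1' _
      exact absurd h1' (by simp)
  · rintro (⟨j, T, hm, hZ⟩ | ⟨c, T, hm, hZ⟩)
    · refine ⟨gen .b * m, hZ, ?_⟩
      show gen .a * (gen .b * m) = gen .b * m
      apply nf_inj
      rw [nf_gen_mul (g := .a), nf_gen_mul, step_b, hm, step_a_bx]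
    · refine ⟨gen .b * (gen (.y (c - 1)) * iW T), hZ, ?_⟩
      show gen .a * (gen .b * (gen (.y (c - 1)) * iW T)) = gen .b * m
      have hT' : Nor T := by
        have h0 := nor_nf m
        rw [hm] at h0
        exact (nor_cons h0).1
      apply nf_inj
      rw [nf_gen_mul (g := .a), nf_gen_mul, nf_gen_mul, step_y, step_b, nf_gen_mul, step_b, hm]
      rw [nf_iW hT', step_a_by]
      have : c - 1 + 1 = c := by ring
      rw [this]

lemma nor_abx {j : ℤ} {R : Wd} (h : Nor (.a :: .b :: .x j :: R)) : False := by
  have h2 := (nor_cons h).2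
  rw [step_a_bx] at h2
  injection h2 with h3 _
  exact SGen.noConfusion h3

lemma nor_aby {c : ℤ} {R : Wd} (h : Nor (.a :: .b :: .y c :: R)) : False := by
  have h2 := (nor_cons h).2
  rw [step_a_by] at h2
  injection h2 with h3 _
  exact SGen.noConfusion h3

lemma fam_univ_set (A : Set S) (h : ∀ m, m ∈ A) : Fam A := by
  right; left
  refine ⟨1, ?_⟩
  ext m
  exact ⟨fun _ => mem_IS_univ m, fun _ => h m⟩

lemma fam_empty_set (A : Set S) (h : ∀ m, m ∉ A) : Fam A := by
  left; ext m
  simp only [Set.mem_empty_iff_false, iff_false]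
  exact h m

lemma preX_IS (i : ℤ) (V : Wd) : Fam {m | gen (.x i) * m ∈ IS (iW V)} := by
  rcases V with _ | ⟨g₀, V'⟩
  · exact fam_univ_set _ (fun m => mem_IS_univ _)
  · by_cases hgi : g₀ = SGen.x i
    · subst hgi
      right; left
      exact ⟨iW V', by rw [iW_cons]; exact pre_cancel_IS (iW V') (.x i)⟩
    · apply fam_empty_set
      intro m hmem
      obtain ⟨l, hl⟩ := mem_IS_cons (show gen (.x i) * m ∈ IS (iW (g₀ :: V')) from hmem)
      rw [nf_gen_mul, step_x] at hl
      rcases clash hl.symm with h | ⟨_, h⟩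
      · exact hgi h.symm
      · exact SGen.noConfusion h

lemma preX_IC (i : ℤ) (V : Wd) : Fam {m | gen (.x i) * m ∈ IC (iW V)} := by
  rcases V with _ | ⟨g₀, V'⟩
  · exact fam_univ_set _ (fun m => ⟨.x i, m, Or.inl ⟨i, rfl⟩, (one_mul _).symm⟩)
  · by_cases hgi : g₀ = SGen.x i
    · subst hgi
      right; right
      exact ⟨iW V', by rw [iW_cons]; exact pre_cancel_IC (iW V') (.x i)⟩
    · apply fam_empty_set
      intro m hmem
      obtain ⟨l, hl⟩ := mem_IC_cons (show gen (.x i) * m ∈ IC (iW (g₀ :: V')) from hmem)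
      rw [nf_gen_mul, step_x] at hl
      rcases clash hl.symm with h | ⟨_, h⟩
      · exact hgi h.symm
      · exact SGen.noConfusion h

lemma preY_IS (i : ℤ) (V : Wd) : Fam {m | gen (.y i) * m ∈ IS (iW V)} := by
  rcases V with _ | ⟨g₀, V'⟩
  · exact fam_univ_set _ (fun m => mem_IS_univ _)
  · by_cases hgi : g₀ = SGen.y i
    · subst hgi
      right; left
      exact ⟨iW V', by rw [iW_cons]; exact pre_cancel_IS (iW V') (.y i)⟩
    · apply fam_empty_set
      intro m hmem
      obtain ⟨l, hl⟩ := mem_IS_cons (show gen (.y i) * m ∈ IS (iW (g₀ :: V')) from hmem)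
      rw [nf_gen_mul, step_y] at hl
      rcases clash hl.symm with h | ⟨_, h⟩
      · exact hgi h.symm
      · exact SGen.noConfusion h

lemma preY_IC (i : ℤ) (V : Wd) : Fam {m | gen (.y i) * m ∈ IC (iW V)} := by
  rcases V with _ | ⟨g₀, V'⟩
  · exact fam_univ_set _ (fun m => ⟨.y i, m, Or.inr ⟨i, rfl⟩, (one_mul _).symm⟩)
  · by_cases hgi : g₀ = SGen.y i
    · subst hgi
      right; right
      exact ⟨iW V', by rw [iW_cons]; exact pre_cancel_IC (iW V') (.y i)⟩
    · apply fam_empty_set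
      intro m hmem
      obtain ⟨l, hl⟩ := mem_IC_cons (show gen (.y i) * m ∈ IC (iW (g₀ :: V')) from hmem)
      rw [nf_gen_mul, step_y] at hl
      rcases clash hl.symm with h | ⟨_, h⟩
      · exact hgi h.symm
      · exact SGen.noConfusion h

lemma mem_pre_aS (W : Wd) (m : S) :
    gen .b * m ∈ IS (iW (.a :: W)) ↔
      ((∃ j T, nf m = .x j :: T ∧ gen .b * m ∈ IS (iW W)) ∨
       (∃ c T, nf m = .y c :: T ∧ gen .b * (gen (.y (c - 1)) * iW T) ∈ IS (iW W))) := by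
  rw [iW_cons, IS_mul]; exact redA _ m

lemma mem_pre_aC (W : Wd) (m : S) :
    gen .b * m ∈ IC (iW (.a :: W)) ↔
      ((∃ j T, nf m = .x j :: T ∧ gen .b * m ∈ IC (iW W)) ∨
       (∃ c T, nf m = .y c :: T ∧ gen .b * (gen (.y (c - 1)) * iW T) ∈ IC (iW W))) := by
  rw [iW_cons, IC_mul]; exact redA _ m

lemma preB_aS : ∀ (V : Wd), Nor (.a :: V) →
    ({m | gen .b * m ∈ IS (iW (.a :: V))} = IC 1 ∨
     {m | gen .b * m ∈ IS (iW (.a :: V))} = ∅) := by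
  intro V
  induction V with
  | nil =>
    intro _
    left; ext m
    simp only [Set.mem_setOf_eq]
    rw [mem_pre_aS, mem_IC_one_iff]
    constructor
    · rintro (⟨j, T, hm, _⟩ | ⟨c, T, hm, _⟩)
      exacts [Or.inl ⟨j, T, hm⟩, Or.inr ⟨c, T, hm⟩]
    · rintro (⟨j, T, hm⟩ | ⟨c, T, hm⟩)
      · exact Or.inl ⟨j, T, hm, mem_IS_univ _⟩
      · exact Or.inr ⟨c, T, hm, mem_IS_univ _⟩
  | cons g₀ V ih =>
    intro hN
    cases g₀ with
    | a =>
      have hN' := nor_cons2 hN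
      have hmem : ∀ w : S, gen .b * w ∈ IS (iW (.a :: V)) ↔
          w ∈ {m | gen .b * m ∈ IS (iW (.a :: V))} := fun w => Iff.rfl
      rcases ih hN' with hc | hc
      · left; ext m
        simp only [Set.mem_setOf_eq]
        rw [mem_pre_aS, mem_IC_one_iff]
        constructor
        · rintro (⟨j, T, hm, _⟩ | ⟨c, T, hm, _⟩)
          exacts [Or.inl ⟨j, T, hm⟩, Or.inr ⟨c, T, hm⟩]
        · rintro (⟨j, T, hm⟩ | ⟨c, T, hm⟩)
          · refine Or.inl ⟨j, T, hm, ?_⟩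
            rw [hmem, hc, mem_IC_one_iff]
            exact Or.inl ⟨j, T, hm⟩
          · refine Or.inr ⟨c, T, hm, ?_⟩
            rw [hmem, hc, mem_IC_one_iff]
            exact Or.inr ⟨c - 1, nf (iW T), by rw [nf_gen_mul, step_y]⟩
      · right; ext m
        simp only [Set.mem_setOf_eq, Set.mem_empty_iff_false, iff_false]
        intro hm
        rcases (mem_pre_aS _ m).mp hm with ⟨j, T, _, hZ⟩ | ⟨c, T, _, hZ⟩
        · rw [hmem, hc] at hZ; exact hZ
        · rw [hmem, hc] at hZ; exact hZ
    | b =>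
      have hx : ∀ w : S, gen .b * w ∈ IS (iW (.b :: V)) ↔ w ∈ IS (iW V) := by
        intro w
        rw [iW_cons]
        constructor
        · intro h
          have h2 : w ∈ {m | gen .b * m ∈ IS (gen .b * iW V)} := h
          rwa [pre_cancel_IS] at h2
        · intro h
          have h2 : w ∈ {m | gen .b * m ∈ IS (gen .b * iW V)} := by
            rw [pre_cancel_IS]; exact h
          exact h2
      cases V with
      | nil =>
        left; ext m
        simp only [Set.mem_setOf_eq]
        rw [mem_pre_aS, mem_IC_one_iff]
        constructor
        · rintro (⟨j, T, hm, _⟩ | ⟨c, T, hm, _⟩)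
          exacts [Or.inl ⟨j, T, hm⟩, Or.inr ⟨c, T, hm⟩]
        · rintro (⟨j, T, hm⟩ | ⟨c, T, hm⟩)
          · exact Or.inl ⟨j, T, hm, (hx m).mpr (mem_IS_univ _)⟩
          · exact Or.inr ⟨c, T, hm, (hx _).mpr (mem_IS_univ _)⟩
      | cons g₁ R =>
        cases g₁ with
        | x j => exact absurd hN nor_abx
        | y c => exact absurd hN nor_aby
        | a =>
          right; ext m
          simp only [Set.mem_setOf_eq, Set.mem_empty_iff_false, iff_false]
          intro hm
          rcases (mem_pre_aS _ m).mp hm with ⟨j, T, hm1, hZ⟩ | ⟨c, T, hm1, hZ⟩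
          · obtain ⟨l, hl⟩ := mem_IS_cons ((hx m).mp hZ)
            rw [hm1] at hl
            rcases clash hl.symm with h | ⟨_, h⟩ <;> exact SGen.noConfusion h
          · obtain ⟨l, hl⟩ := mem_IS_cons ((hx _).mp hZ)
            rw [nf_gen_mul, step_y] at hl
            rcases clash hl.symm with h | ⟨_, h⟩ <;> exact SGen.noConfusion h
        | b =>
          right; ext m
          simp only [Set.mem_setOf_eq, Set.mem_empty_iff_false, iff_false]
          intro hm
          rcases (mem_pre_aS _ m).mp hm with ⟨j, T, hm1, hZ⟩ | ⟨c, T, hm1, hZ⟩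
          · obtain ⟨l, hl⟩ := mem_IS_cons ((hx m).mp hZ)
            rw [hm1] at hl
            rcases clash hl.symm with h | ⟨h2, h⟩
            · exact SGen.noConfusion h
            · exact SGen.noConfusion h2
          · obtain ⟨l, hl⟩ := mem_IS_cons ((hx _).mp hZ)
            rw [nf_gen_mul, step_y] at hl
            rcases clash hl.symm with h | ⟨h2, h⟩
            · exact SGen.noConfusion h
            · exact SGen.noConfusion h2
    | x j =>
      right; ext m
      simp only [Set.mem_setOf_eq, Set.mem_empty_iff_false, iff_false]
      intro hm
      rcases (mem_pre_aS _ m).mp hm with ⟨j', T, _, hZ⟩ | ⟨c', T, _, hZ⟩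
      · obtain ⟨l, hl⟩ := mem_IS_cons (show gen .b * m ∈ IS (iW (.x j :: V)) from hZ)
        rw [nf_gen_mul, step_b] at hl
        rcases clash hl.symm with h | ⟨h2, _⟩
        · exact SGen.noConfusion h
        · exact SGen.noConfusion h2
      · obtain ⟨l, hl⟩ := mem_IS_cons (show _ ∈ IS (iW (.x j :: V)) from hZ)
        rw [nf_gen_mul, step_b] at hl
        rcases clash hl.symm with h | ⟨h2, _⟩
        · exact SGen.noConfusion h
        · exact SGen.noConfusion h2
    | y c =>
      right; ext m
      simp only [Set.mem_setOf_eq, Set.mem_empty_iff_false, iff_false]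
      intro hm
      rcases (mem_pre_aS _ m).mp hm with ⟨j', T, _, hZ⟩ | ⟨c', T, _, hZ⟩
      · obtain ⟨l, hl⟩ := mem_IS_cons (show gen .b * m ∈ IS (iW (.y c :: V)) from hZ)
        rw [nf_gen_mul, step_b] at hl
        rcases clash hl.symm with h | ⟨h2, _⟩
        · exact SGen.noConfusion h
        · exact SGen.noConfusion h2
      · obtain ⟨l, hl⟩ := mem_IS_cons (show _ ∈ IS (iW (.y c :: V)) from hZ)
        rw [nf_gen_mul, step_b] at hl
        rcases clash hl.symm with h | ⟨h2, _⟩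
        · exact SGen.noConfusion h
        · exact SGen.noConfusion h2

lemma preB_aC : ∀ (V : Wd), Nor (.a :: V) →
    ({m | gen .b * m ∈ IC (iW (.a :: V))} = IC 1 ∨
     {m | gen .b * m ∈ IC (iW (.a :: V))} = ∅) := by
  intro V
  induction V with
  | nil =>
    intro _
    right; ext m
    simp only [Set.mem_setOf_eq, Set.mem_empty_iff_false, iff_false]
    intro hm
    rcases (mem_pre_aC _ m).mp hm with ⟨j, T, _, hZ⟩ | ⟨c, T, _, hZ⟩
    · rcases mem_IC_one_iff.mp hZ with ⟨j', T', hh⟩ | ⟨c', T', hh⟩ <;>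
        (rw [nf_gen_mul, step_b] at hh; exact SGen.noConfusion (List.head_eq_of_cons_eq hh))
    · rcases mem_IC_one_iff.mp hZ with ⟨j', T', hh⟩ | ⟨c', T', hh⟩ <;>
        (rw [nf_gen_mul, step_b] at hh; exact SGen.noConfusion (List.head_eq_of_cons_eq hh))
  | cons g₀ V ih =>
    intro hN
    cases g₀ with
    | a =>
      have hN' := nor_cons2 hN
      have hmem : ∀ w : S, gen .b * w ∈ IC (iW (.a :: V)) ↔
          w ∈ {m | gen .b * m ∈ IC (iW (.a :: V))} := fun w => Iff.rfl
      rcases ih hN' with hc | hc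
      · left; ext m
        simp only [Set.mem_setOf_eq]
        rw [mem_pre_aC, mem_IC_one_iff]
        constructor
        · rintro (⟨j, T, hm, _⟩ | ⟨c, T, hm, _⟩)
          exacts [Or.inl ⟨j, T, hm⟩, Or.inr ⟨c, T, hm⟩]
        · rintro (⟨j, T, hm⟩ | ⟨c, T, hm⟩)
          · refine Or.inl ⟨j, T, hm, ?_⟩
            rw [hmem, hc, mem_IC_one_iff]
            exact Or.inl ⟨j, T, hm⟩
          · refine Or.inr ⟨c, T, hm, ?_⟩
            rw [hmem, hc, mem_IC_one_iff]
            exact Or.inr ⟨c - 1, nf (iW T), by rw [nf_gen_mul, step_y]⟩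
      · right; ext m
        simp only [Set.mem_setOf_eq, Set.mem_empty_iff_false, iff_false]
        intro hm
        rcases (mem_pre_aC _ m).mp hm with ⟨j, T, _, hZ⟩ | ⟨c, T, _, hZ⟩
        · rw [hmem, hc] at hZ; exact hZ
        · rw [hmem, hc] at hZ; exact hZ
    | b =>
      have hx : ∀ w : S, gen .b * w ∈ IC (iW (.b :: V)) ↔ w ∈ IC (iW V) := by
        intro w
        rw [iW_cons]
        constructor
        · intro h
          have h2 : w ∈ {m | gen .b * m ∈ IC (gen .b * iW V)} := h
          rwa [pre_cancel_IC] at h2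
        · intro h
          have h2 : w ∈ {m | gen .b * m ∈ IC (gen .b * iW V)} := by
            rw [pre_cancel_IC]; exact h
          exact h2
      cases V with
      | nil =>
        left; ext m
        simp only [Set.mem_setOf_eq]
        rw [mem_pre_aC, mem_IC_one_iff]
        constructor
        · rintro (⟨j, T, hm, _⟩ | ⟨c, T, hm, _⟩)
          exacts [Or.inl ⟨j, T, hm⟩, Or.inr ⟨c, T, hm⟩]
        · rintro (⟨j, T, hm⟩ | ⟨c, T, hm⟩)
          · refine Or.inl ⟨j, T, hm, (hx m).mpr ?_⟩
            exact mem_IC_one_iff.mpr (Or.inl ⟨j, T, hm⟩)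
          · refine Or.inr ⟨c, T, hm, (hx _).mpr ?_⟩
            exact mem_IC_one_iff.mpr
              (Or.inr ⟨c - 1, nf (iW T), by rw [nf_gen_mul, step_y]⟩)
      | cons g₁ R =>
        cases g₁ with
        | x j => exact absurd hN nor_abx
        | y c => exact absurd hN nor_aby
        | a =>
          right; ext m
          simp only [Set.mem_setOf_eq, Set.mem_empty_iff_false, iff_false]
          intro hm
          rcases (mem_pre_aC _ m).mp hm with ⟨j, T, hm1, hZ⟩ | ⟨c, T, hm1, hZ⟩
          · obtain ⟨l, hl⟩ := mem_IC_cons ((hx m).mp hZ)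
            rw [hm1] at hl
            rcases clash hl.symm with h | ⟨_, h⟩ <;> exact SGen.noConfusion h
          · obtain ⟨l, hl⟩ := mem_IC_cons ((hx _).mp hZ)
            rw [nf_gen_mul, step_y] at hl
            rcases clash hl.symm with h | ⟨_, h⟩ <;> exact SGen.noConfusion h
        | b =>
          right; ext m
          simp only [Set.mem_setOf_eq, Set.mem_empty_iff_false, iff_false]
          intro hm
          rcases (mem_pre_aC _ m).mp hm with ⟨j, T, hm1, hZ⟩ | ⟨c, T, hm1, hZ⟩
          · obtain ⟨l, hl⟩ := mem_IC_cons ((hx m).mp hZ)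
            rw [hm1] at hl
            rcases clash hl.symm with h | ⟨h2, h⟩
            · exact SGen.noConfusion h
            · exact SGen.noConfusion h2
          · obtain ⟨l, hl⟩ := mem_IC_cons ((hx _).mp hZ)
            rw [nf_gen_mul, step_y] at hl
            rcases clash hl.symm with h | ⟨h2, h⟩
            · exact SGen.noConfusion h
            · exact SGen.noConfusion h2
    | x j =>
      right; ext m
      simp only [Set.mem_setOf_eq, Set.mem_empty_iff_false, iff_false]
      intro hm
      rcases (mem_pre_aC _ m).mp hm with ⟨j', T, _, hZ⟩ | ⟨c', T, _, hZ⟩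
      · obtain ⟨l, hl⟩ := mem_IC_cons (show gen .b * m ∈ IC (iW (.x j :: V)) from hZ)
        rw [nf_gen_mul, step_b] at hl
        rcases clash hl.symm with h | ⟨h2, _⟩
        · exact SGen.noConfusion h
        · exact SGen.noConfusion h2
      · obtain ⟨l, hl⟩ := mem_IC_cons (show _ ∈ IC (iW (.x j :: V)) from hZ)
        rw [nf_gen_mul, step_b] at hl
        rcases clash hl.symm with h | ⟨h2, _⟩
        · exact SGen.noConfusion h
        · exact SGen.noConfusion h2
    | y c =>
      right; ext m
      simp only [Set.mem_setOf_eq, Set.mem_empty_iff_false, iff_false]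
      intro hm
      rcases (mem_pre_aC _ m).mp hm with ⟨j', T, _, hZ⟩ | ⟨c', T, _, hZ⟩
      · obtain ⟨l, hl⟩ := mem_IC_cons (show gen .b * m ∈ IC (iW (.y c :: V)) from hZ)
        rw [nf_gen_mul, step_b] at hl
        rcases clash hl.symm with h | ⟨h2, _⟩
        · exact SGen.noConfusion h
        · exact SGen.noConfusion h2
      · obtain ⟨l, hl⟩ := mem_IC_cons (show _ ∈ IC (iW (.y c :: V)) from hZ)
        rw [nf_gen_mul, step_b] at hl
        rcases clash hl.symm with h | ⟨h2, _⟩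
        · exact SGen.noConfusion h
        · exact SGen.noConfusion h2

lemma preB_IS (V : Wd) (hN : Nor V) : Fam {m | gen .b * m ∈ IS (iW V)} := by
  rcases V with _ | ⟨g₀, V'⟩
  · exact fam_univ_set _ (fun m => mem_IS_univ _)
  · cases g₀ with
    | b =>
      right; left
      exact ⟨iW V', by rw [iW_cons]; exact pre_cancel_IS (iW V') .b⟩
    | a =>
      rcases preB_aS V' hN with hc | hc
      · right; right; exact ⟨1, hc⟩
      · left; exact hc
    | x j =>
      apply fam_empty_set
      intro m hmem
      obtain ⟨l, hl⟩ := mem_IS_cons (show gen .b * m ∈ IS (iW (.x j :: V')) from hmem)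
      rw [nf_gen_mul, step_b] at hl
      rcases clash hl.symm with h | ⟨h2, _⟩
      · exact SGen.noConfusion h
      · exact SGen.noConfusion h2
    | y c =>
      apply fam_empty_set
      intro m hmem
      obtain ⟨l, hl⟩ := mem_IS_cons (show gen .b * m ∈ IS (iW (.y c :: V')) from hmem)
      rw [nf_gen_mul, step_b] at hl
      rcases clash hl.symm with h | ⟨h2, _⟩
      · exact SGen.noConfusion h
      · exact SGen.noConfusion h2

lemma preB_IC (V : Wd) (hN : Nor V) : Fam {m | gen .b * m ∈ IC (iW V)} := by
  rcases V with _ | ⟨g₀, V'⟩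
  · apply fam_empty_set
    intro m hmem
    rcases mem_IC_one_iff.mp (show gen .b * m ∈ IC 1 from hmem) with ⟨j, T, hh⟩ | ⟨c, T, hh⟩ <;>
      (rw [nf_gen_mul, step_b] at hh; exact SGen.noConfusion (List.head_eq_of_cons_eq hh))
  · cases g₀ with
    | b =>
      right; right
      exact ⟨iW V', by rw [iW_cons]; exact pre_cancel_IC (iW V') .b⟩
    | a =>
      rcases preB_aC V' hN with hc | hc
      · right; right; exact ⟨1, hc⟩
      · left; exact hc
    | x j =>
      apply fam_empty_set
      intro m hmem
      obtain ⟨l, hl⟩ := mem_IC_cons (show gen .b * m ∈ IC (iW (.x j :: V')) from hmem)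
      rw [nf_gen_mul, step_b] at hl
      rcases clash hl.symm with h | ⟨h2, _⟩
      · exact SGen.noConfusion h
      · exact SGen.noConfusion h2
    | y c =>
      apply fam_empty_set
      intro m hmem
      obtain ⟨l, hl⟩ := mem_IC_cons (show gen .b * m ∈ IC (iW (.y c :: V')) from hmem)
      rw [nf_gen_mul, step_b] at hl
      rcases clash hl.symm with h | ⟨h2, _⟩
      · exact SGen.noConfusion h
      · exact SGen.noConfusion h2

lemma preA_IS (V : Wd) (hN : Nor V) : Fam {m | gen .a * m ∈ IS (iW V)} := by
  rcases V with _ | ⟨g₀, V'⟩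
  · exact fam_univ_set _ (fun m => mem_IS_univ _)
  · cases g₀ with
    | a =>
      right; left
      exact ⟨iW V', by rw [iW_cons]; exact pre_cancel_IS (iW V') .a⟩
    | x j =>
      apply fam_empty_set
      intro m hmem
      obtain ⟨l, hl⟩ := mem_IS_cons (show gen .a * m ∈ IS (iW (.x j :: V')) from hmem)
      rw [nf_gen_mul] at hl
      rw [step_x] at hl
      rcases clash (l := nf m) (g := .x j) hl with h | ⟨_, h⟩ <;> exact SGen.noConfusion h
    | y c =>
      apply fam_empty_set
      intro m hmem
      obtain ⟨l, hl⟩ := mem_IS_cons (show gen .a * m ∈ IS (iW (.y c :: V')) from hmem)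
      rw [nf_gen_mul] at hl
      rw [step_y] at hl
      rcases clash (l := nf m) (g := .y c) hl with h | ⟨_, h⟩ <;> exact SGen.noConfusion h
    | b =>
      rcases V' with _ | ⟨g₁, R⟩
      · -- IS (b) : value IC (gen .b)
        right; right
        refine ⟨gen .b, ?_⟩
        ext m
        simp only [Set.mem_setOf_eq]
        constructor
        · rintro ⟨u, he⟩
          rw [iW_single] at he
          have hnf := congrArg nf he
          rw [nf_gen_mul, nf_gen_mul, step_b] at hnf
          rcases step_a_elim (nf m) with ⟨j, T, hT⟩ | ⟨c, T, hT⟩ | ⟨_, _, e⟩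
          · exact ⟨.x j, iW T, Or.inl ⟨j, rfl⟩, by rw [← iW_nf m, hT]; rfl⟩
          · exact ⟨.y c, iW T, Or.inr ⟨c, rfl⟩, by rw [← iW_nf m, hT]; rfl⟩
          · rw [e] at hnf
            exact absurd (List.head_eq_of_cons_eq hnf) (by simp)
        · rintro ⟨g, u, (⟨j, rfl⟩ | ⟨c, rfl⟩), rfl⟩
          · exact ⟨gen (.x j) * u, by rw [iW_single]; exact rel_x' j u⟩
          · exact ⟨gen (.y (c + 1)) * u, by rw [iW_single]; exact rel_y' c u⟩
      · cases g₁ with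
        | x l =>
          right; left
          refine ⟨iW (.b :: .x l :: R), ?_⟩
          ext m
          simp only [Set.mem_setOf_eq]
          constructor
          · rintro ⟨u, he⟩
            have hnf := congrArg nf he
            rw [nf_gen_mul, nf_iW_mul] at hnf
            simp only [actW_cons, step_b, step_x] at hnf
            rcases step_a_elim (nf m) with ⟨j, T, hT⟩ | ⟨c, T, hT⟩ | ⟨_, _, e⟩
            · rw [hT, step_a_bx] at hnf
              refine ⟨u, nf_inj ?_⟩
              rw [hT, nf_iW_mul]
              simp only [actW_cons, step_b, step_x]
              exact hnf
            · rw [hT, step_a_by] at hnf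
              injection hnf with _ h2; injection h2 with h3 _
              exact absurd h3 (by simp)
            · rw [e] at hnf
              exact absurd (List.head_eq_of_cons_eq hnf) (by simp)
          · rintro ⟨u, rfl⟩
            refine ⟨u, ?_⟩
            apply nf_inj
            rw [nf_gen_mul, nf_iW_mul]
            simp only [actW_cons, step_b, step_x]
            rw [step_a_bx]
        | y l =>
          right; left
          refine ⟨iW (.b :: .y (l - 1) :: R), ?_⟩
          ext m
          simp only [Set.mem_setOf_eq]
          constructor
          · rintro ⟨u, he⟩
            have hnf := congrArg nf he
            rw [nf_gen_mul, nf_iW_mul] at hnf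
            simp only [actW_cons, step_b, step_y] at hnf
            rcases step_a_elim (nf m) with ⟨j, T, hT⟩ | ⟨c, T, hT⟩ | ⟨_, _, e⟩
            · rw [hT, step_a_bx] at hnf
              injection hnf with _ h2; injection h2 with h3 _
              exact absurd h3 (by simp)
            · rw [hT, step_a_by] at hnf
              injection hnf with _ h2; injection h2 with h3 h4
              have hc : c = l - 1 := by have := SGen.y.inj h3; omega
              refine ⟨u, nf_inj ?_⟩
              rw [hT, nf_iW_mul]
              simp only [actW_cons, step_b, step_y]
              rw [hc, h4]
            · rw [e] at hnf
              exact absurd (List.head_eq_of_cons_eq hnf) (by simp)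
          · rintro ⟨u, rfl⟩
            refine ⟨u, ?_⟩
            apply nf_inj
            rw [nf_gen_mul, nf_iW_mul, nf_iW_mul]
            simp only [actW_cons, step_b, step_y]
            rw [step_a_by]
            have : l - 1 + 1 = l := by ring
            rw [this]
        | a =>
          apply fam_empty_set
          intro m hmem
          obtain ⟨u, he⟩ := hmem
          have hnf := congrArg nf he
          rw [nf_gen_mul, nf_iW_mul] at hnf
          simp only [actW_cons, step_b] at hnf
          rcases step_a_elim (nf m) with ⟨j, T, hT⟩ | ⟨c, T, hT⟩ | ⟨_, _, e⟩
          · rw [hT, step_a_bx] at hnf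
            injection hnf with _ h2
            rcases clash h2.symm with h | ⟨_, h⟩ <;> exact SGen.noConfusion h
          · rw [hT, step_a_by] at hnf
            injection hnf with _ h2
            rcases clash h2.symm with h | ⟨_, h⟩ <;> exact SGen.noConfusion h
          · rw [e] at hnf
            exact absurd (List.head_eq_of_cons_eq hnf) (by simp)
        | b =>
          apply fam_empty_set
          intro m hmem
          obtain ⟨u, he⟩ := hmem
          have hnf := congrArg nf he
          rw [nf_gen_mul, nf_iW_mul] at hnf
          simp only [actW_cons, step_b] at hnf
          rcases step_a_elim (nf m) with ⟨j, T, hT⟩ | ⟨c, T, hT⟩ | ⟨_, _, e⟩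
          · rw [hT, step_a_bx] at hnf
            injection hnf with _ h2
            injection h2 with h3 _
            exact SGen.noConfusion h3
          · rw [hT, step_a_by] at hnf
            injection hnf with _ h2
            injection h2 with h3 _
            exact SGen.noConfusion h3
          · rw [e] at hnf
            exact absurd (List.head_eq_of_cons_eq hnf) (by simp)

lemma preA_IC (V : Wd) (hN : Nor V) : Fam {m | gen .a * m ∈ IC (iW V)} := by
  rcases V with _ | ⟨g₀, V'⟩
  · apply fam_empty_set
    intro m hmem
    rcases mem_IC_one_iff.mp (show gen .a * m ∈ IC 1 from hmem) with ⟨j, T, hh⟩ | ⟨c, T, hh⟩ <;>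
      · rw [nf_gen_mul] at hh
        rcases clash hh with h | ⟨_, h⟩ <;> exact SGen.noConfusion h
  · cases g₀ with
    | a =>
      right; right
      exact ⟨iW V', by rw [iW_cons]; exact pre_cancel_IC (iW V') .a⟩
    | x j =>
      apply fam_empty_set
      intro m hmem
      obtain ⟨l, hl⟩ := mem_IC_cons (show gen .a * m ∈ IC (iW (.x j :: V')) from hmem)
      rw [nf_gen_mul, step_x] at hl
      rcases clash (l := nf m) (g := .x j) hl with h | ⟨_, h⟩ <;> exact SGen.noConfusion h
    | y c =>
      apply fam_empty_set
      intro m hmem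
      obtain ⟨l, hl⟩ := mem_IC_cons (show gen .a * m ∈ IC (iW (.y c :: V')) from hmem)
      rw [nf_gen_mul, step_y] at hl
      rcases clash (l := nf m) (g := .y c) hl with h | ⟨_, h⟩ <;> exact SGen.noConfusion h
    | b =>
      rcases V' with _ | ⟨g₁, R⟩
      · right; right
        refine ⟨gen .b, ?_⟩
        ext m
        simp only [Set.mem_setOf_eq]
        constructor
        · rintro ⟨g, u, hg, he⟩
          rw [iW_single] at he
          have hnf := congrArg nf he
          rw [nf_gen_mul, nf_gen_mul, step_b] at hnf
          rcases step_a_elim (nf m) with ⟨j, T, hT⟩ | ⟨c, T, hT⟩ | ⟨_, _, e⟩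
          · exact ⟨.x j, iW T, Or.inl ⟨j, rfl⟩, by rw [← iW_nf m, hT]; rfl⟩
          · exact ⟨.y c, iW T, Or.inr ⟨c, rfl⟩, by rw [← iW_nf m, hT]; rfl⟩
          · rw [e] at hnf
            exact absurd (List.head_eq_of_cons_eq hnf) (by simp)
        · rintro ⟨g, u, (⟨j, rfl⟩ | ⟨c, rfl⟩), rfl⟩
          · exact ⟨.x j, u, Or.inl ⟨j, rfl⟩, by rw [iW_single]; exact rel_x' j u⟩
          · exact ⟨.y (c + 1), u, Or.inr ⟨c + 1, rfl⟩, by rw [iW_single]; exact rel_y' c u⟩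
      · cases g₁ with
        | x l =>
          right; right
          refine ⟨iW (.b :: .x l :: R), ?_⟩
          ext m
          simp only [Set.mem_setOf_eq]
          constructor
          · rintro ⟨g, u, hg, he⟩
            have hnf := congrArg nf he
            rw [nf_gen_mul, nf_iW_mul] at hnf
            simp only [actW_cons, step_b, step_x] at hnf
            rcases step_a_elim (nf m) with ⟨j, T, hT⟩ | ⟨c, T, hT⟩ | ⟨_, _, e⟩
            · rw [hT, step_a_bx] at hnf
              refine ⟨g, u, hg, nf_inj ?_⟩
              rw [hT, nf_iW_mul]
              simp only [actW_cons, step_b, step_x]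
              exact hnf
            · rw [hT, step_a_by] at hnf
              injection hnf with _ h2; injection h2 with h3 _
              exact absurd h3 (by simp)
            · rw [e] at hnf
              exact absurd (List.head_eq_of_cons_eq hnf) (by simp)
          · rintro ⟨g, u, hg, rfl⟩
            refine ⟨g, u, hg, ?_⟩
            apply nf_inj
            rw [nf_gen_mul, nf_iW_mul]
            simp only [actW_cons, step_b, step_x]
            rw [step_a_bx]
        | y l =>
          right; right
          refine ⟨iW (.b :: .y (l - 1) :: R), ?_⟩
          ext m
          simp only [Set.mem_setOf_eq]
          constructor
          · rintro ⟨g, u, hg, he⟩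
            have hnf := congrArg nf he
            rw [nf_gen_mul, nf_iW_mul] at hnf
            simp only [actW_cons, step_b, step_y] at hnf
            rcases step_a_elim (nf m) with ⟨j, T, hT⟩ | ⟨c, T, hT⟩ | ⟨_, _, e⟩
            · rw [hT, step_a_bx] at hnf
              injection hnf with _ h2; injection h2 with h3 _
              exact absurd h3 (by simp)
            · rw [hT, step_a_by] at hnf
              injection hnf with _ h2; injection h2 with h3 h4
              have hc : c = l - 1 := by have := SGen.y.inj h3; omega
              refine ⟨g, u, hg, nf_inj ?_⟩
              rw [hT, nf_iW_mul]
              simp only [actW_cons, step_b, step_y]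
              rw [hc, h4]
            · rw [e] at hnf
              exact absurd (List.head_eq_of_cons_eq hnf) (by simp)
          · rintro ⟨g, u, hg, rfl⟩
            refine ⟨g, u, hg, ?_⟩
            apply nf_inj
            rw [nf_gen_mul, nf_iW_mul, nf_iW_mul]
            simp only [actW_cons, step_b, step_y]
            rw [step_a_by]
            have : l - 1 + 1 = l := by ring
            rw [this]
        | a =>
          apply fam_empty_set
          intro m hmem
          obtain ⟨g, u, hg, he⟩ := hmem
          have hnf := congrArg nf he
          rw [nf_gen_mul, nf_iW_mul] at hnf
          simp only [actW_cons, step_b] at hnf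
          rcases step_a_elim (nf m) with ⟨j, T, hT⟩ | ⟨c, T, hT⟩ | ⟨_, _, e⟩
          · rw [hT, step_a_bx] at hnf
            injection hnf with _ h2
            rcases clash h2.symm with h | ⟨_, h⟩ <;> exact SGen.noConfusion h
          · rw [hT, step_a_by] at hnf
            injection hnf with _ h2
            rcases clash h2.symm with h | ⟨_, h⟩ <;> exact SGen.noConfusion h
          · rw [e] at hnf
            exact absurd (List.head_eq_of_cons_eq hnf) (by simp)
        | b =>
          apply fam_empty_set
          intro m hmem
          obtain ⟨g, u, hg, he⟩ := hmem
          have hnf := congrArg nf he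
          rw [nf_gen_mul, nf_iW_mul] at hnf
          simp only [actW_cons, step_b] at hnf
          rcases step_a_elim (nf m) with ⟨j, T, hT⟩ | ⟨c, T, hT⟩ | ⟨_, _, e⟩
          · rw [hT, step_a_bx] at hnf
            injection hnf with _ h2
            injection h2 with h3 _
            exact SGen.noConfusion h3
          · rw [hT, step_a_by] at hnf
            injection hnf with _ h2
            injection h2 with h3 _
            exact SGen.noConfusion h3
          · rw [e] at hnf
            exact absurd (List.head_eq_of_cons_eq hnf) (by simp)

lemma preGen_fam (g : SGen) {Z : Set S} (hZ : Fam Z) : Fam {m | gen g * m ∈ Z} := by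
  rcases hZ with rfl | ⟨v, rfl⟩ | ⟨v, rfl⟩
  · exact fam_empty_set _ (fun m hm => hm)
  · rw [show v = iW (nf v) from (iW_nf v).symm]
    cases g with
    | a => exact preA_IS (nf v) (nor_nf v)
    | b => exact preB_IS (nf v) (nor_nf v)
    | x i => exact preX_IS i (nf v)
    | y i => exact preY_IS i (nf v)
  · rw [show v = iW (nf v) from (iW_nf v).symm]
    cases g with
    | a => exact preA_IC (nf v) (nor_nf v)
    | b => exact preB_IC (nf v) (nor_nf v)
    | x i => exact preX_IC i (nf v)
    | y i => exact preY_IC i (nf v)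

lemma pre_iW_fam : ∀ (l : Wd) {Z : Set S}, Fam Z → Fam {m | iW l * m ∈ Z} := by
  intro l
  induction l with
  | nil =>
    intro Z hZ
    have h1 : {m | iW [] * m ∈ Z} = Z := by
      ext m; rw [Set.mem_setOf_eq, iW_nil, one_mul]
    rwa [h1]
  | cons g l ih =>
    intro Z hZ
    have h1 : {m | iW (g :: l) * m ∈ Z} = {m | iW l * m ∈ {w | gen g * w ∈ Z}} := by
      ext m
      simp only [Set.mem_setOf_eq, iW_cons, mul_assoc]
    rw [h1]
    exact ih (preGen_fam g hZ)

lemma classif {Z : Set S} (hZ : IsConstructible S Z) : Fam Z := by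
  induction hZ with
  | univ =>
    right; left
    refine ⟨1, ?_⟩
    ext m
    exact ⟨fun _ => mem_IS_univ m, fun _ => trivial⟩
  | mul t h ih =>
    rcases ih with rfl | ⟨v, rfl⟩ | ⟨v, rfl⟩
    · left; simp
    · right; left; exact ⟨t * v, (IS_mul t v).symm⟩
    · right; right; exact ⟨t * v, (IC_mul t v).symm⟩
  | preimage t h ih =>
    rw [show t = iW (nf t) from (iW_nf t).symm]
    exact pre_iW_fam (nf t) ih

lemma dichotomy {X : Set S} (hX : IsConstructible S X) :
    X = ∅ ∨ (∃ w, w ∈ X ∧ X ⊆ IS w) ∨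
      (∃ v, (∀ n : ℤ, v * gen (.y n) ∈ X) ∧ X ⊆ IC v) := by
  rcases classif hX with rfl | ⟨v, rfl⟩ | ⟨v, rfl⟩
  · left; rfl
  · right; left; exact ⟨v, ⟨1, (mul_one v).symm⟩, fun m hm => hm⟩
  · right; right
    exact ⟨v, fun n => ⟨.y n, 1, Or.inr ⟨n, rfl⟩, by rw [mul_one]⟩, fun m hm => hm⟩

end SReg

theorem S_stronglyCstarRegular_aux : StronglyCstarRegular S := by
  intro n h m X Xs hh hX hXs hne hsub
  classical
  rcases SReg.dichotomy hX with rfl | ⟨w, hwX, hXw⟩ | ⟨v, hvX, hXv⟩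
  · obtain ⟨x0, hx0⟩ := hne
    exact absurd hx0.1 (Set.notMem_empty x0)
  · -- principal sandwich case
    have hwD : w ∈ X \ ⋃ i, Xs i := by
      refine ⟨hwX, ?_⟩
      intro hmem
      rw [Set.mem_iUnion] at hmem
      obtain ⟨i, hi⟩ := hmem
      obtain ⟨x0, hx01, hx02⟩ := hne
      apply hx02
      rw [Set.mem_iUnion]
      refine ⟨i, ?_⟩
      obtain ⟨u, rfl⟩ := hXw hx01
      exact SReg.constructible_rightIdeal (hXs i) w hi u
    have hwU := hsub hwD
    rw [Set.mem_iUnion] at hwU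
    obtain ⟨k, hk⟩ := hwU
    refine ⟨1, fun _ => X, fun _ => k, fun _ => hX, ?_, ?_⟩
    · intro z hz
      exact Set.mem_iUnion.mpr ⟨0, hz.1⟩
    · intro j z hz
      obtain ⟨u, rfl⟩ := hXw hz
      exact SReg.hull_equivariant (hh k) (w, w) hk u
  · -- C*-cone case
    have hKi : ∀ i : Fin m, {n' : ℤ | v * gen (SGen.y n') ∈ Xs i}.Subsingleton := by
      intro i n₁ h₁ n₂ h₂
      by_contra hne'
      have hall := SReg.lemJ (hXs i) v n₁ n₂ hne' h₁ h₂
      obtain ⟨x0, hx01, hx02⟩ := hne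
      apply hx02
      rw [Set.mem_iUnion]
      refine ⟨i, ?_⟩
      obtain ⟨g, u, hg, rfl⟩ := hXv hx01
      exact hall g u hg
    have hbad : (⋃ i : Fin m, {n' : ℤ | v * gen (SGen.y n') ∈ Xs i}).Finite :=
      Set.finite_iUnion (fun i => (hKi i).finite)
    have hT : {n' : ℤ | v * gen (SGen.y n') ∈ X \ ⋃ i, Xs i}.Infinite := by
      apply Set.Infinite.mono (s := (⋃ i : Fin m, {n' : ℤ | v * gen (SGen.y n') ∈ Xs i})ᶜ)
      · intro n' hn'
        refine ⟨hvX n', ?_⟩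
        intro hc
        rw [Set.mem_iUnion] at hc
        obtain ⟨i, hi⟩ := hc
        exact hn' (Set.mem_iUnion.mpr ⟨i, hi⟩)
      · exact hbad.infinite_compl
    have hsubT : {n' : ℤ | v * gen (SGen.y n') ∈ X \ ⋃ i, Xs i} ⊆
        ⋃ k : Fin n, {n' : ℤ | v * gen (SGen.y n') ∈ X \ ⋃ i, Xs i ∧
          (v * gen (SGen.y n'), v * gen (SGen.y n')) ∈ h k} := by
      intro n' hn'
      have hmem := hsub hn'
      rw [Set.mem_iUnion] at hmem
      obtain ⟨k, hk⟩ := hmem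
      exact Set.mem_iUnion.mpr ⟨k, hn', hk⟩
    by_cases hss : ∀ k : Fin n, {n' : ℤ | v * gen (SGen.y n') ∈ X \ ⋃ i, Xs i ∧
        (v * gen (SGen.y n'), v * gen (SGen.y n')) ∈ h k}.Subsingleton
    · exfalso
      exact hT (Set.Finite.subset (Set.finite_iUnion fun k => (hss k).finite) hsubT)
    · push_neg at hss
      obtain ⟨k, hk⟩ := hss
      obtain ⟨n₁, hn₁, n₂, hn₂, hne'⟩ := hk
      have hfix := SReg.fixAll (hh k) v hne' hn₁.2 hn₂.2
      refine ⟨1, fun _ => X, fun _ => k, fun _ => hX, ?_, ?_⟩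
      · intro z hz
        exact Set.mem_iUnion.mpr ⟨0, hz.1⟩
      · intro j z hz
        obtain ⟨g, u, hg, rfl⟩ := hXv hz
        exact hfix g u hg


/-- The monoid `S` is strongly C*-regular. -/
theorem S_stronglyCstarRegular : StronglyCstarRegular S :=
  S_stronglyCstarRegular_aux
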